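/- The cutoff cubic Dirac operator 𝔻 satisfies [𝔻, t_{ij}] = (i−j)(k+1)γ_{ij}, where t_{ij} = e_{ij} + s_{ij} and k is the level of the central extension in the e-sector. -/

import Mathlib

open Finset

/-- The cutoff index set `[-N, N] ⊂ ℤ`. -/
noncomputable def cutoff (N : ℕ) : Finset ℤ := Finset.Icc (-(N : ℤ)) (N : ℤ)

/-- The normal-ordered spin operators
`s_{ij} = (1/2) Σ_m γ_{im}γ_{mj} − (N − i + 1/2)δ_{ij}`. -/
noncomputable def spinOp {A : Type*} [Ring A] [Algebra ℚ A] (N : ℕ)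
    (γ : ℤ → ℤ → A) (i j : ℤ) : A :=
  (2 : ℚ)⁻¹ • ∑ l ∈ cutoff N, γ i l * γ l j -
    (if i = j then ((N : ℚ) - (i : ℚ) + (2 : ℚ)⁻¹) • (1 : A) else 0)

/-- The normal-ordered cubic sum
`Σ_{i,j} :s_{ij}γ_{ji}: = Σ_{i>j} s_{ij}γ_{ji} + Σ_{i≤j} γ_{ji}s_{ij}`. -/
noncomputable def normalOrderedCubic {A : Type*} [Ring A] [Algebra ℚ A] (N : ℕ)
    (γ : ℤ → ℤ → A) : A :=
  ∑ i ∈ cutoff N, ∑ j ∈ cutoff N,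
    if j < i then spinOp N γ i j * γ j i else γ j i * spinOp N γ i j

/-- The cutoff cubic Dirac operator
`𝔻 = Σ_{i,j} e_{ij}γ_{ji} + (1/3) Σ_{i,j} :s_{ij}γ_{ji}:`. -/
noncomputable def cubicDirac {A : Type*} [Ring A] [Algebra ℚ A] (N : ℕ)
    (E γ : ℤ → ℤ → A) : A :=
  (∑ i ∈ cutoff N, ∑ j ∈ cutoff N, E i j * γ j i) +
    (3 : ℚ)⁻¹ • normalOrderedCubic N γ

/-- The total current `t_{ij} = e_{ij} + s_{ij}`. -/
noncomputable def totalCurrent {A : Type*} [Ring A] [Algebra ℚ A] (N : ℕ)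
    (E γ : ℤ → ℤ → A) (i j : ℤ) : A :=
  E i j + spinOp N γ i j

set_option linter.unusedSectionVars false

section Aux
variable {A : Type*} [Ring A] [Algebra ℚ A] {N : ℕ} {γ : ℤ → ℤ → A}
variable (hγ : ∀ i ∈ cutoff N, ∀ j ∈ cutoff N, ∀ l ∈ cutoff N, ∀ m ∈ cutoff N,
      γ i j * γ l m + γ l m * γ i j = if i = m ∧ j = l then (2 : A) else 0)


lemma half2 (x : A) : (2:ℚ)⁻¹ • ((2:A) * x) = x := by
  rw [two_mul, smul_add, ← add_smul]; norm_num

lemma scal_comm (q : ℚ) (c : A) : (q • (1:A)) * c = c * (q • (1:A)) := by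
  rw [smul_mul_assoc, one_mul, mul_smul_comm, mul_one]

lemma spin_sum (i b : ℤ) : (2:ℚ)⁻¹ • ∑ l ∈ cutoff N, γ i l * γ l b
    = spinOp N γ i b + (if i = b then ((N : ℚ) - (i : ℚ) + (2 : ℚ)⁻¹) • (1 : A) else 0) := by
  unfold spinOp; rw [sub_add_cancel]

include hγ

lemma gswap {a b c d : ℤ} (ha : a ∈ cutoff N) (hb : b ∈ cutoff N)
    (hc : c ∈ cutoff N) (hd : d ∈ cutoff N) :
    γ a b * γ c d = (if a = d ∧ b = c then (2 : A) else 0) - γ c d * γ a b :=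
  eq_sub_of_add_eq (hγ a ha b hb c hc d hd)

-- per-term triple commutator
lemma gtriple {a b c d e f : ℤ} (ha : a ∈ cutoff N) (hb : b ∈ cutoff N)
    (hc : c ∈ cutoff N) (hd : d ∈ cutoff N) (he : e ∈ cutoff N) (hf : f ∈ cutoff N) :
    γ a b * γ c d * γ e f - γ e f * (γ a b * γ c d) =
      (if c = f ∧ d = e then (2:A) else 0) * γ a b -
      (if a = f ∧ b = e then (2:A) else 0) * γ c d := by
  have key : γ a b * γ c d * γ e f - γ e f * (γ a b * γ c d)
      = γ a b * (γ c d * γ e f + γ e f * γ c d)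
        - (γ a b * γ e f + γ e f * γ a b) * γ c d := by noncomm_ring
  rw [key, hγ c hc d hd e he f hf, hγ a ha b hb e he f hf]
  congr 1
  split <;> simp [two_mul, mul_two]

lemma comm_sγ {i j a b : ℤ} (hi : i ∈ cutoff N) (hj : j ∈ cutoff N)
    (ha : a ∈ cutoff N) (hb : b ∈ cutoff N) :
    spinOp N γ i j * γ a b - γ a b * spinOp N γ i j =
      (if j = a then γ i b else 0) - (if i = b then γ a j else 0) := by
  have hS : (∑ l ∈ cutoff N, γ i l * γ l j) * γ a b
      - γ a b * (∑ l ∈ cutoff N, γ i l * γ l j)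
      = (if j = a then (2:A) * γ i b else 0) - (if i = b then (2:A) * γ a j else 0) := by
    rw [Finset.sum_mul, Finset.mul_sum, ← Finset.sum_sub_distrib,
      Finset.sum_congr rfl (fun l hl => gtriple hγ hi hl hl hj ha hb),
      Finset.sum_sub_distrib]
    congr 1
    · rw [Finset.sum_congr rfl (fun l hl =>
        show (if l = b ∧ j = a then (2:A) else 0) * γ i l
          = if l = b then (if j = a then (2:A) * γ i l else 0) else 0 by
          by_cases h1 : l = b <;> by_cases h2 : j = a <;> simp [h1, h2]),
        Finset.sum_ite_eq' (cutoff N) b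
          (fun l => if j = a then (2:A) * γ i l else 0), if_pos hb]
    · rw [Finset.sum_congr rfl (fun l hl =>
        show (if i = b ∧ l = a then (2:A) else 0) * γ l j
          = if l = a then (if i = b then (2:A) * γ l j else 0) else 0 by
          by_cases h1 : l = a <;> by_cases h2 : i = b <;> simp [h1, h2]),
        Finset.sum_ite_eq' (cutoff N) a
          (fun l => if i = b then (2:A) * γ l j else 0), if_pos ha]
  have hc : ∀ c : A, (if i = j then ((N : ℚ) - (i : ℚ) + (2 : ℚ)⁻¹) • (1 : A) else 0) * c
      = c * (if i = j then ((N : ℚ) - (i : ℚ) + (2 : ℚ)⁻¹) • (1 : A) else 0) := by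
    intro c; split
    · exact scal_comm _ _
    · rw [zero_mul, mul_zero]
  unfold spinOp
  rw [sub_mul, mul_sub, smul_mul_assoc, mul_smul_comm, hc]
  have : (2:ℚ)⁻¹ • ((∑ l ∈ cutoff N, γ i l * γ l j) * γ a b)
      - γ a b * (if i = j then ((N : ℚ) - (i : ℚ) + (2 : ℚ)⁻¹) • (1 : A) else 0)
      - ((2:ℚ)⁻¹ • (γ a b * ∑ l ∈ cutoff N, γ i l * γ l j)
      - γ a b * (if i = j then ((N : ℚ) - (i : ℚ) + (2 : ℚ)⁻¹) • (1 : A) else 0))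
      = (2:ℚ)⁻¹ • ((∑ l ∈ cutoff N, γ i l * γ l j) * γ a b
        - γ a b * ∑ l ∈ cutoff N, γ i l * γ l j) := by
    rw [smul_sub]; abel
  rw [this, hS, smul_sub]
  congr 1
  · split
    · exact half2 _
    · exact smul_zero _
  · split
    · exact half2 _
    · exact smul_zero _


lemma comm_ss {i j a b : ℤ} (hi : i ∈ cutoff N) (hj : j ∈ cutoff N)
    (ha : a ∈ cutoff N) (hb : b ∈ cutoff N) :
    spinOp N γ i j * spinOp N γ a b - spinOp N γ a b * spinOp N γ i j =
      (if j = a then spinOp N γ i b else 0) - (if i = b then spinOp N γ a j else 0)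
        + (if j = a ∧ i = b then ((a - i : ℤ) : ℚ) • (1:A) else 0) := by
  have per : ∀ l ∈ cutoff N,
      spinOp N γ i j * (γ a l * γ l b) - γ a l * γ l b * spinOp N γ i j
      = ((if j = a then γ i l else 0) - (if i = l then γ a j else 0)) * γ l b
        + γ a l * ((if j = l then γ i b else 0) - (if i = b then γ l j else 0)) := by
    intro l hl
    have h1 := comm_sγ hγ hi hj ha hl
    have h2 := comm_sγ hγ hi hj hl hb
    calc spinOp N γ i j * (γ a l * γ l b) - γ a l * γ l b * spinOp N γ i j
        = (spinOp N γ i j * γ a l - γ a l * spinOp N γ i j) * γ l b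
          + γ a l * (spinOp N γ i j * γ l b - γ l b * spinOp N γ i j) := by noncomm_ring
      _ = _ := by rw [h1, h2]
  have hT : spinOp N γ i j * (∑ l ∈ cutoff N, γ a l * γ l b)
      - (∑ l ∈ cutoff N, γ a l * γ l b) * spinOp N γ i j
      = (if j = a then ∑ l ∈ cutoff N, γ i l * γ l b else 0)
        - (if i = b then ∑ l ∈ cutoff N, γ a l * γ l j else 0) := by
    rw [Finset.mul_sum, Finset.sum_mul, ← Finset.sum_sub_distrib,
      Finset.sum_congr rfl per]
    simp only [sub_mul, mul_sub, ite_mul, mul_ite, zero_mul, mul_zero,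
      Finset.sum_sub_distrib, Finset.sum_add_distrib, Finset.sum_ite_irrel,
      Finset.sum_ite_eq, Finset.sum_ite_eq', Finset.sum_const_zero,
      if_pos hi, if_pos hj]
    abel
  have hc : ∀ c : A, (if a = b then ((N : ℚ) - (a : ℚ) + (2 : ℚ)⁻¹) • (1 : A) else 0) * c
      = c * (if a = b then ((N : ℚ) - (a : ℚ) + (2 : ℚ)⁻¹) • (1 : A) else 0) := by
    intro c; split
    · rw [smul_mul_assoc, one_mul, mul_smul_comm, mul_one]
    · rw [zero_mul, mul_zero]
  have key : spinOp N γ i j * spinOp N γ a b - spinOp N γ a b * spinOp N γ i j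
      = (2:ℚ)⁻¹ • (spinOp N γ i j * (∑ l ∈ cutoff N, γ a l * γ l b)
        - (∑ l ∈ cutoff N, γ a l * γ l b) * spinOp N γ i j) := by
    have hs : spinOp N γ a b = (2 : ℚ)⁻¹ • ∑ l ∈ cutoff N, γ a l * γ l b -
      (if a = b then ((N : ℚ) - (a : ℚ) + (2 : ℚ)⁻¹) • (1 : A) else 0) := rfl
    rw [hs, mul_sub, sub_mul, mul_smul_comm, smul_mul_assoc,
      hc (spinOp N γ i j), smul_sub]
    abel
  rw [key, hT, smul_sub]
  have e1 : (2:ℚ)⁻¹ • (if j = a then ∑ l ∈ cutoff N, γ i l * γ l b else 0)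
      = if j = a then spinOp N γ i b
          + (if i = b then ((N : ℚ) - (i : ℚ) + (2 : ℚ)⁻¹) • (1 : A) else 0) else 0 := by
    split
    · exact spin_sum i b
    · exact smul_zero _
  have e2 : (2:ℚ)⁻¹ • (if i = b then ∑ l ∈ cutoff N, γ a l * γ l j else 0)
      = if i = b then spinOp N γ a j
          + (if a = j then ((N : ℚ) - (a : ℚ) + (2 : ℚ)⁻¹) • (1 : A) else 0) else 0 := by
    split
    · exact spin_sum a j
    · exact smul_zero _
  rw [e1, e2]
  by_cases hja : j = a
  · by_cases hib : i = b
    · subst hja; subst hib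
      have hsc : ((N:ℚ) - (i:ℚ) + (2:ℚ)⁻¹) • (1:A) - ((N:ℚ) - (j:ℚ) + (2:ℚ)⁻¹) • (1:A)
          = ((j - i : ℤ) : ℚ) • (1:A) := by
        rw [← sub_smul]; congr 1; push_cast; ring
      simp only [if_pos rfl, and_self, if_true, ite_true]
      rw [← hsc]; abel
    · simp [hib]
  · have haj : ¬ a = j := fun h => hja h.symm
    simp [hja, haj]


lemma cubic_split :
    (∑ i ∈ cutoff N, ∑ j ∈ cutoff N,
      if j < i then spinOp N γ i j * γ j i else γ j i * spinOp N γ i j) =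
    (∑ i ∈ cutoff N, ∑ j ∈ cutoff N, spinOp N γ i j * γ j i)
      - ∑ i ∈ cutoff N, ∑ j ∈ cutoff N, (if j < i then 0 else γ i i - γ j j) := by
  rw [← Finset.sum_sub_distrib]
  refine Finset.sum_congr rfl fun i hi => ?_
  rw [← Finset.sum_sub_distrib]
  refine Finset.sum_congr rfl fun j hj => ?_
  split
  · rw [sub_zero]
  · have h := comm_sγ hγ hi hj hj hi
    simp only [eq_self_iff_true, if_true] at h
    -- h : s_ij γ_ji − γ_ji s_ij = γ i i − γ j j
    have : γ j i * spinOp N γ i j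
        = spinOp N γ i j * γ j i - (γ i i - γ j j) := by
      rw [← h]; abel
    rw [this]


lemma part1_comm_s {p q : ℤ} (hp : p ∈ cutoff N) (hq : q ∈ cutoff N) :
    (∑ i ∈ cutoff N, ∑ j ∈ cutoff N, spinOp N γ i j * γ j i) * spinOp N γ p q
      - spinOp N γ p q * (∑ i ∈ cutoff N, ∑ j ∈ cutoff N, spinOp N γ i j * γ j i)
      = ((p - q : ℤ) : ℚ) • γ p q := by
  rw [Finset.sum_mul, Finset.mul_sum, ← Finset.sum_sub_distrib]
  have per : ∀ i ∈ cutoff N,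
      (∑ j ∈ cutoff N, spinOp N γ i j * γ j i) * spinOp N γ p q
        - spinOp N γ p q * ∑ j ∈ cutoff N, spinOp N γ i j * γ j i
      = ∑ j ∈ cutoff N,
          (((if j = p then spinOp N γ i q else 0) - (if i = q then spinOp N γ p j else 0)
            + (if j = p ∧ i = q then ((p - i : ℤ) : ℚ) • (1:A) else 0)) * γ j i
          - spinOp N γ i j * ((if q = j then γ p i else 0) - (if p = i then γ j q else 0))) := by
    intro i hi
    rw [Finset.sum_mul, Finset.mul_sum, ← Finset.sum_sub_distrib]
    refine Finset.sum_congr rfl fun j hj => ?_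
    have h1 := comm_ss hγ hi hj hp hq
    have h2 := comm_sγ hγ hp hq hj hi
    calc spinOp N γ i j * γ j i * spinOp N γ p q - spinOp N γ p q * (spinOp N γ i j * γ j i)
        = (spinOp N γ i j * spinOp N γ p q - spinOp N γ p q * spinOp N γ i j) * γ j i
          - spinOp N γ i j * (spinOp N γ p q * γ j i - γ j i * spinOp N γ p q) := by
          noncomm_ring
      _ = _ := by rw [h1, h2]
  rw [Finset.sum_congr rfl per]
  simp only [add_mul, sub_mul, mul_sub, ite_mul, mul_ite, zero_mul, mul_zero,
    smul_mul_assoc, one_mul, ite_and, Finset.sum_sub_distrib, Finset.sum_add_distrib,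
    Finset.sum_ite_irrel, Finset.sum_ite_eq, Finset.sum_ite_eq', Finset.sum_const_zero,
    if_pos hp, if_pos hq]
  abel


lemma corr_comm_s {p q : ℤ} (hp : p ∈ cutoff N) (hq : q ∈ cutoff N) :
    (∑ i ∈ cutoff N, ∑ j ∈ cutoff N, (if j < i then 0 else γ i i - γ j j)) * spinOp N γ p q
      - spinOp N γ p q * (∑ i ∈ cutoff N, ∑ j ∈ cutoff N, (if j < i then 0 else γ i i - γ j j))
      = ((2*q - 2*p : ℤ) : ℚ) • γ p q := by
  have hg : ∀ x ∈ cutoff N, γ x x * spinOp N γ p q - spinOp N γ p q * γ x x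
      = (if p = x then γ p q else 0) - (if q = x then γ p q else 0) := by
    intro x hx
    have h := comm_sγ hγ hp hq hx hx
    calc γ x x * spinOp N γ p q - spinOp N γ p q * γ x x
        = -(spinOp N γ p q * γ x x - γ x x * spinOp N γ p q) := by abel
      _ = -((if q = x then γ p x else 0) - (if p = x then γ x q else 0)) := by rw [h]
      _ = (if p = x then γ p q else 0) - (if q = x then γ p q else 0) := by
          by_cases h1 : p = x <;> by_cases h2 : q = x <;> simp [h1, h2]
  have key : (∑ i ∈ cutoff N, ∑ j ∈ cutoff N, (if j < i then 0 else γ i i - γ j j))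
        * spinOp N γ p q
      - spinOp N γ p q * (∑ i ∈ cutoff N, ∑ j ∈ cutoff N, (if j < i then 0 else γ i i - γ j j))
      = ∑ i ∈ cutoff N, ∑ j ∈ cutoff N, (if j < i then 0 else
          (((if p = i then γ p q else 0) - (if q = i then γ p q else 0))
          - ((if p = j then γ p q else 0) - (if q = j then γ p q else 0)))) := by
    rw [Finset.sum_mul, Finset.mul_sum, ← Finset.sum_sub_distrib]
    refine Finset.sum_congr rfl fun i hi => ?_
    rw [Finset.sum_mul, Finset.mul_sum, ← Finset.sum_sub_distrib]
    refine Finset.sum_congr rfl fun j hj => ?_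
    split
    · simp
    · calc (γ i i - γ j j) * spinOp N γ p q - spinOp N γ p q * (γ i i - γ j j)
          = (γ i i * spinOp N γ p q - spinOp N γ p q * γ i i)
            - (γ j j * spinOp N γ p q - spinOp N γ p q * γ j j) := by noncomm_ring
        _ = _ := by rw [hg i hi, hg j hj]
  rw [key]
  have split2 : ∀ i j : ℤ, (if j < i then (0:A) else
        (((if p = i then γ p q else 0) - (if q = i then γ p q else 0))
        - ((if p = j then γ p q else 0) - (if q = j then γ p q else 0))))
      = (if j < i then 0 else ((if p = i then γ p q else 0) - (if q = i then γ p q else 0)))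
        - (if j < i then 0 else ((if p = j then γ p q else 0) - (if q = j then γ p q else 0))) := by
    intro i j; split <;> simp
  simp only [split2, Finset.sum_sub_distrib]
  have hA : ∀ i : ℤ, (∑ j ∈ cutoff N, (if j < i then (0:A) else
        ((if p = i then γ p q else 0) - (if q = i then γ p q else 0))))
      = ((cutoff N).filter (fun j => ¬ j < i)).card
          • ((if p = i then γ p q else 0) - (if q = i then γ p q else 0)) := by
    intro i
    rw [Finset.sum_ite, Finset.sum_const_zero, zero_add, Finset.sum_const]
  have hB : (∑ i ∈ cutoff N, ∑ j ∈ cutoff N, (if j < i then (0:A) else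
        ((if p = j then γ p q else 0) - (if q = j then γ p q else 0))))
      = ∑ j ∈ cutoff N, ((cutoff N).filter (fun i => ¬ j < i)).card
          • ((if p = j then γ p q else 0) - (if q = j then γ p q else 0)) := by
    rw [Finset.sum_comm]
    refine Finset.sum_congr rfl fun j hj => ?_
    rw [Finset.sum_ite, Finset.sum_const_zero, zero_add, Finset.sum_const]
  rw [Finset.sum_congr rfl (fun i _ => hA i), hB]
  -- evaluate the two sums of smuls
  have hsum : ∀ c : ℤ → ℕ, (∑ i ∈ cutoff N, c i
        • ((if p = i then γ p q else 0) - (if q = i then γ p q else 0)))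
      = c p • γ p q - c q • γ p q := by
    intro c
    have hterm : ∀ i : ℤ, c i • ((if p = i then γ p q else 0) - (if q = i then γ p q else 0))
        = (if p = i then c i • γ p q else 0) - (if q = i then c i • γ p q else 0) := by
      intro i; by_cases h1 : p = i <;> by_cases h2 : q = i <;> simp [h1, h2]
    simp only [hterm, Finset.sum_sub_distrib, Finset.sum_ite_eq, if_pos hp, if_pos hq]
  rw [hsum, hsum]
  -- card computations
  have hcge : ∀ x : ℤ, x ∈ cutoff N → ((((cutoff N).filter (fun j => ¬ j < x)).card : ℤ))
      = (N : ℤ) + 1 - x := by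
    intro x hx
    have hx' := Finset.mem_Icc.mp hx
    have : (cutoff N).filter (fun j => ¬ j < x) = Finset.Icc x (N : ℤ) := by
      ext t; simp only [cutoff, Finset.mem_filter, Finset.mem_Icc, not_lt]; omega
    rw [this, Int.card_Icc_of_le (a := x) (b := (N:ℤ)) (by omega)]
  have hcle : ∀ x : ℤ, x ∈ cutoff N → ((((cutoff N).filter (fun i => ¬ x < i)).card : ℤ))
      = x + (N : ℤ) + 1 := by
    intro x hx
    have hx' := Finset.mem_Icc.mp hx
    have : (cutoff N).filter (fun i => ¬ x < i) = Finset.Icc (-(N:ℤ)) x := by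
      ext t; simp only [cutoff, Finset.mem_filter, Finset.mem_Icc, not_lt]; omega
    rw [this, Int.card_Icc_of_le (a := -(N:ℤ)) (b := x) (by omega)]; ring
  simp only [show ∀ n : ℕ, ∀ x : A, n • x = ((n : ℤ)) • x from fun n x => (natCast_zsmul x n).symm]
  rw [hcge p hp, hcge q hq, hcle p hp, hcle q hq, Int.cast_smul_eq_zsmul,
    ← sub_smul, ← sub_smul, ← sub_smul]
  congr 1
  ring


noncomputable def normalOrderedCubic' {A : Type*} [Ring A] [Algebra ℚ A] (N : ℕ)
    (γ : ℤ → ℤ → A) : A :=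
  ∑ i ∈ cutoff N, ∑ j ∈ cutoff N,
    if j < i then spinOp N γ i j * γ j i else γ j i * spinOp N γ i j

lemma cubic_comm_s {p q : ℤ} (hp : p ∈ cutoff N) (hq : q ∈ cutoff N) :
    normalOrderedCubic' N γ * spinOp N γ p q - spinOp N γ p q * normalOrderedCubic' N γ
      = ((3 * (p - q) : ℤ) : ℚ) • γ p q := by
  unfold normalOrderedCubic'
  rw [cubic_split hγ, sub_mul, mul_sub]
  have : (∑ i ∈ cutoff N, ∑ j ∈ cutoff N, spinOp N γ i j * γ j i) * spinOp N γ p q -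
        (∑ i ∈ cutoff N, ∑ j ∈ cutoff N, (if j < i then 0 else γ i i - γ j j)) * spinOp N γ p q -
      (spinOp N γ p q * (∑ i ∈ cutoff N, ∑ j ∈ cutoff N, spinOp N γ i j * γ j i) -
        spinOp N γ p q * ∑ i ∈ cutoff N, ∑ j ∈ cutoff N, (if j < i then 0 else γ i i - γ j j))
      = ((∑ i ∈ cutoff N, ∑ j ∈ cutoff N, spinOp N γ i j * γ j i) * spinOp N γ p q
          - spinOp N γ p q * (∑ i ∈ cutoff N, ∑ j ∈ cutoff N, spinOp N γ i j * γ j i))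
        - ((∑ i ∈ cutoff N, ∑ j ∈ cutoff N, (if j < i then 0 else γ i i - γ j j)) * spinOp N γ p q
          - spinOp N γ p q * ∑ i ∈ cutoff N, ∑ j ∈ cutoff N, (if j < i then 0 else γ i i - γ j j)) := by
    abel
  rw [this, part1_comm_s hγ hp hq, corr_comm_s hγ hp hq, ← sub_smul]
  congr 1
  push_cast
  ring

end Aux

section EAux
variable {A : Type*} [Ring A] [Algebra ℚ A] {N : ℕ} {γ E : ℤ → ℤ → A}
variable (hcomm : ∀ i ∈ cutoff N, ∀ j ∈ cutoff N, ∀ l ∈ cutoff N, ∀ m ∈ cutoff N,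
      E i j * γ l m = γ l m * E i j)

include hcomm

lemma Ecomm_spin {p q i j : ℤ} (hp : p ∈ cutoff N) (hq : q ∈ cutoff N)
    (hi : i ∈ cutoff N) (hj : j ∈ cutoff N) :
    E p q * spinOp N γ i j = spinOp N γ i j * E p q := by
  unfold spinOp
  rw [mul_sub, sub_mul, mul_smul_comm, smul_mul_assoc, Finset.mul_sum, Finset.sum_mul]
  congr 1
  · congr 1
    refine Finset.sum_congr rfl fun l hl => ?_
    rw [← mul_assoc, hcomm p hp q hq i hi l hl, mul_assoc, hcomm p hp q hq l hl j hj,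
      ← mul_assoc]
  · split
    · rw [mul_smul_comm, smul_mul_assoc, mul_one, one_mul]
    · rw [mul_zero, zero_mul]

lemma Ecomm_cubic {p q : ℤ} (hp : p ∈ cutoff N) (hq : q ∈ cutoff N) :
    E p q * normalOrderedCubic' N γ = normalOrderedCubic' N γ * E p q := by
  unfold normalOrderedCubic'
  rw [Finset.mul_sum, Finset.sum_mul]
  refine Finset.sum_congr rfl fun i hi => ?_
  rw [Finset.mul_sum, Finset.sum_mul]
  refine Finset.sum_congr rfl fun j hj => ?_
  split
  · rw [← mul_assoc, Ecomm_spin hcomm hp hq hi hj, mul_assoc,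
      hcomm p hp q hq j hj i hi, ← mul_assoc]
  · rw [← mul_assoc, hcomm p hp q hq j hj i hi, mul_assoc,
      Ecomm_spin hcomm hp hq hi hj, ← mul_assoc]

end EAux

section S1
variable {A : Type*} [Ring A] [Algebra ℚ A] {N : ℕ} {k : ℤ} {γ E : ℤ → ℤ → A}
variable (hγ : ∀ i ∈ cutoff N, ∀ j ∈ cutoff N, ∀ l ∈ cutoff N, ∀ m ∈ cutoff N,
      γ i j * γ l m + γ l m * γ i j = if i = m ∧ j = l then (2 : A) else 0)
variable (hE : ∀ i ∈ cutoff N, ∀ j ∈ cutoff N, ∀ l ∈ cutoff N, ∀ m ∈ cutoff N,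
      E i j * E l m - E l m * E i j =
        (if j = l then E i m else 0) - (if i = m then E l j else 0) +
          (if j = l ∧ i = m then ((k * (l - i) : ℤ) : ℚ) • (1 : A) else 0))
variable (hcomm : ∀ i ∈ cutoff N, ∀ j ∈ cutoff N, ∀ l ∈ cutoff N, ∀ m ∈ cutoff N,
      E i j * γ l m = γ l m * E i j)

include hE hcomm in
lemma S1_comm_E {p q : ℤ} (hp : p ∈ cutoff N) (hq : q ∈ cutoff N) :
    (∑ i ∈ cutoff N, ∑ j ∈ cutoff N, E i j * γ j i) * E p q
      - E p q * (∑ i ∈ cutoff N, ∑ j ∈ cutoff N, E i j * γ j i)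
      = (∑ i ∈ cutoff N, E i q * γ p i) - (∑ j ∈ cutoff N, E p j * γ j q)
        + ((k * (p - q) : ℤ) : ℚ) • γ p q := by
  rw [Finset.sum_mul, Finset.mul_sum, ← Finset.sum_sub_distrib]
  have per : ∀ i ∈ cutoff N, ∀ j ∈ cutoff N,
      E i j * γ j i * E p q - E p q * (E i j * γ j i)
      = ((if j = p then E i q else 0) - (if i = q then E p j else 0)
          + (if j = p ∧ i = q then ((k * (p - i) : ℤ) : ℚ) • (1:A) else 0)) * γ j i := by
    intro i hi j hj
    have h1 := hcomm p hp q hq j hj i hi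
    have h2 := hE i hi j hj p hp q hq
    calc E i j * γ j i * E p q - E p q * (E i j * γ j i)
        = E i j * (γ j i * E p q) - (E p q * E i j) * γ j i := by noncomm_ring
      _ = E i j * (E p q * γ j i) - (E p q * E i j) * γ j i := by rw [← h1]
      _ = (E i j * E p q - E p q * E i j) * γ j i := by noncomm_ring
      _ = _ := by rw [h2]
  have inner : ∀ i ∈ cutoff N, (∑ j ∈ cutoff N, E i j * γ j i) * E p q
      - E p q * ∑ j ∈ cutoff N, E i j * γ j i
      = ∑ j ∈ cutoff N, ((if j = p then E i q else 0) - (if i = q then E p j else 0)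
          + (if j = p ∧ i = q then ((k * (p - i) : ℤ) : ℚ) • (1:A) else 0)) * γ j i := by
    intro i hi
    rw [Finset.sum_mul, Finset.mul_sum, ← Finset.sum_sub_distrib]
    exact Finset.sum_congr rfl fun j hj => per i hi j hj
  rw [Finset.sum_congr rfl inner]
  simp only [add_mul, sub_mul, ite_mul, zero_mul, smul_mul_assoc, one_mul, ite_and,
    Finset.sum_sub_distrib, Finset.sum_add_distrib, Finset.sum_ite_irrel,
    Finset.sum_ite_eq, Finset.sum_ite_eq', Finset.sum_const_zero, if_pos hp, if_pos hq]

include hγ hcomm in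
lemma S1_comm_s {p q : ℤ} (hp : p ∈ cutoff N) (hq : q ∈ cutoff N) :
    (∑ i ∈ cutoff N, ∑ j ∈ cutoff N, E i j * γ j i) * spinOp N γ p q
      - spinOp N γ p q * (∑ i ∈ cutoff N, ∑ j ∈ cutoff N, E i j * γ j i)
      = (∑ j ∈ cutoff N, E p j * γ j q) - (∑ i ∈ cutoff N, E i q * γ p i) := by
  rw [Finset.sum_mul, Finset.mul_sum, ← Finset.sum_sub_distrib]
  have per : ∀ i ∈ cutoff N, ∀ j ∈ cutoff N,
      E i j * γ j i * spinOp N γ p q - spinOp N γ p q * (E i j * γ j i)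
      = E i j * ((if p = i then γ j q else 0) - (if q = j then γ p i else 0)) := by
    intro i hi j hj
    have h1 := Ecomm_spin hcomm hi hj hp hq
    have h2 := comm_sγ hγ hp hq hj hi
    calc E i j * γ j i * spinOp N γ p q - spinOp N γ p q * (E i j * γ j i)
        = E i j * (γ j i * spinOp N γ p q) - (spinOp N γ p q * E i j) * γ j i := by
          noncomm_ring
      _ = E i j * (γ j i * spinOp N γ p q) - (E i j * spinOp N γ p q) * γ j i := by rw [h1]
      _ = E i j * (γ j i * spinOp N γ p q - spinOp N γ p q * γ j i) := by noncomm_ring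
      _ = E i j * -(spinOp N γ p q * γ j i - γ j i * spinOp N γ p q) := by rw [neg_sub]
      _ = E i j * -((if q = j then γ p i else 0) - (if p = i then γ j q else 0)) := by rw [h2]
      _ = _ := by rw [neg_sub]
  have inner : ∀ i ∈ cutoff N, (∑ j ∈ cutoff N, E i j * γ j i) * spinOp N γ p q
      - spinOp N γ p q * ∑ j ∈ cutoff N, E i j * γ j i
      = ∑ j ∈ cutoff N, E i j * ((if p = i then γ j q else 0) - (if q = j then γ p i else 0)) := by
    intro i hi
    rw [Finset.sum_mul, Finset.mul_sum, ← Finset.sum_sub_distrib]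
    exact Finset.sum_congr rfl fun j hj => per i hi j hj
  rw [Finset.sum_congr rfl inner]
  simp only [mul_sub, mul_ite, mul_zero,
    Finset.sum_sub_distrib, Finset.sum_ite_irrel,
    Finset.sum_ite_eq, Finset.sum_ite_eq', Finset.sum_const_zero, if_pos hp, if_pos hq]

end S1


/-- The cutoff cubic Dirac operator satisfies `[𝔻, t_{ij}] = (i−j)(k+1) γ_{ij}` where
`t_{ij} = e_{ij} + s_{ij}`; the `e`-sector has relations of level `k` and commutes
with the Clifford sector. -/
theorem dirac_commutator_current {A : Type*} [Ring A] [Algebra ℚ A]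
    (N : ℕ) (k : ℤ) (E γ : ℤ → ℤ → A)
    (hγ : ∀ i ∈ cutoff N, ∀ j ∈ cutoff N, ∀ l ∈ cutoff N, ∀ m ∈ cutoff N,
      γ i j * γ l m + γ l m * γ i j = if i = m ∧ j = l then (2 : A) else 0)
    (hE : ∀ i ∈ cutoff N, ∀ j ∈ cutoff N, ∀ l ∈ cutoff N, ∀ m ∈ cutoff N,
      E i j * E l m - E l m * E i j =
        (if j = l then E i m else 0) - (if i = m then E l j else 0) +
          (if j = l ∧ i = m then ((k * (l - i) : ℤ) : ℚ) • (1 : A) else 0))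
    (hcomm : ∀ i ∈ cutoff N, ∀ j ∈ cutoff N, ∀ l ∈ cutoff N, ∀ m ∈ cutoff N,
      E i j * γ l m = γ l m * E i j)
    (i : ℤ) (hi : i ∈ cutoff N) (j : ℤ) (hj : j ∈ cutoff N) :
    cubicDirac N E γ * totalCurrent N E γ i j -
        totalCurrent N E γ i j * cubicDirac N E γ =
      (((i - j) * (k + 1) : ℤ) : ℚ) • γ i j := by
  have hQ : normalOrderedCubic N γ = normalOrderedCubic' N γ := rfl
  unfold cubicDirac totalCurrent
  rw [hQ]
  set S1 := ∑ a ∈ cutoff N, ∑ b ∈ cutoff N, E a b * γ b a with hS1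
  set Q3 := (3:ℚ)⁻¹ • normalOrderedCubic' N γ with hQ3
  have expand : (S1 + Q3) * (E i j + spinOp N γ i j)
      - (E i j + spinOp N γ i j) * (S1 + Q3)
      = (S1 * E i j - E i j * S1)
        + (S1 * spinOp N γ i j - spinOp N γ i j * S1)
        + ((Q3 * E i j - E i j * Q3) + (Q3 * spinOp N γ i j - spinOp N γ i j * Q3)) := by
    noncomm_ring
  rw [expand]
  have h1 := S1_comm_E hE hcomm hi hj
  have h2 := S1_comm_s hγ hcomm hi hj
  have h3 : Q3 * E i j - E i j * Q3 = 0 := by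
    rw [hQ3, smul_mul_assoc, mul_smul_comm, Ecomm_cubic hcomm hi hj, sub_self]
  have h4 : Q3 * spinOp N γ i j - spinOp N γ i j * Q3 = ((i - j : ℤ) : ℚ) • γ i j := by
    rw [hQ3, smul_mul_assoc, mul_smul_comm, ← smul_sub, cubic_comm_s hγ hi hj, smul_smul]
    congr 1
    push_cast; ring
  rw [h1, h2, h3, h4, zero_add]
  have hcomb : ((k * (i - j) : ℤ) : ℚ) • γ i j + ((i - j : ℤ) : ℚ) • γ i j
      = (((i - j) * (k + 1) : ℤ) : ℚ) • γ i j := by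
    rw [← add_smul]; congr 1; push_cast; ring
  rw [← hcomb]
  abel
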